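/- Let Γ be a lattice in ℝ^d and R a linear isometry. The set of scaling factors Scal_Γ(R) = {β ∈ ℝ : βRΓ ⊆ Γ} equals den_Γ(R)·ℤ, where den_Γ(R) is the smallest positive element of Scal_Γ(R), provided R is a similarity isometry of Γ (i.e., Scal_Γ(R) ≠ {0}). -/
import Mathlib

/-- If R is a similarity isometry of a lattice Γ, then Scal_Γ(R) = den_Γ(R)·ℤ,
where den_Γ(R) is the smallest positive element of Scal_Γ(R). -/
theorem stmt3 (d : ℕ) (Γ : Submodule ℤ (EuclideanSpace ℝ (Fin d)))
    [DiscreteTopology Γ] [IsZLattice ℝ Γ]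
    (R : EuclideanSpace ℝ (Fin d) ≃ₗᵢ[ℝ] EuclideanSpace ℝ (Fin d))
    (den : ℝ)
    (hsim : ∃ β > (0 : ℝ), ∀ γ ∈ Γ, β • R γ ∈ Γ)
    (hden : IsLeast {β : ℝ | 0 < β ∧ ∀ γ ∈ Γ, β • R γ ∈ Γ} den) :
    {β : ℝ | ∀ γ ∈ Γ, β • R γ ∈ Γ} = {β : ℝ | ∃ k : ℤ, β = (k : ℝ) * den} := by
  obtain ⟨⟨hden_pos, hdenS⟩, hden_lb⟩ := hden
  ext β
  simp only [Set.mem_setOf_eq]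
  constructor
  · intro hβ
    set k : ℤ := ⌊β / den⌋ with hk
    refine ⟨k, ?_⟩
    have hsub : ∀ γ ∈ Γ, (β - (k : ℝ) * den) • R γ ∈ Γ := by
      intro γ hγ
      have h1 : β • R γ ∈ Γ := hβ γ hγ
      have h2 : den • R γ ∈ Γ := hdenS γ hγ
      have heq : (β - (k : ℝ) * den) • R γ = β • R γ - k • (den • R γ) := by
        rw [sub_smul, mul_smul, Int.cast_smul_eq_zsmul]
      rw [heq]
      exact Γ.sub_mem h1 (Γ.smul_mem k h2)
    have hle : 0 ≤ β - (k : ℝ) * den := by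
      have := Int.floor_le (β / den)
      have h' : (k : ℝ) * den ≤ β := by
        exact (le_div_iff₀ hden_pos).mp this
      linarith
    have hlt : β - (k : ℝ) * den < den := by
      have := Int.lt_floor_add_one (β / den)
      have h' : β < ((k : ℝ) + 1) * den := by
        exact (div_lt_iff₀ hden_pos).mp this
      nlinarith
    rcases eq_or_lt_of_le hle with h | h
    · linarith
    · exfalso
      have := hden_lb ⟨h, hsub⟩
      linarith
  · rintro ⟨k, rfl⟩ γ hγ
    have h2 : den • R γ ∈ Γ := hdenS γ hγ
    have heq : ((k : ℝ) * den) • R γ = k • (den • R γ) := by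
      rw [mul_smul, Int.cast_smul_eq_zsmul]
    rw [heq]
    exact Γ.smul_mem k h2
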